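/- The splitting field of the polynomial x⁵ - 48x⁴ + 632x³ - 3600x² + 9472x - 9472 over ℚ is not an abelian extension of ℚ; equivalently (by the Kronecker–Weber theorem), at least one of its roots is not a cyclotomic number. -/

import Mathlib

open Polynomial

-- piece 1: irreducibility of the cubic over ℚ
noncomputable def hcube : ℚ[X] := X ^ 3 - 40 * X ^ 2 + 296 * X - 592

theorem hcube_natDegree : hcube.natDegree = 3 := by
  unfold hcube; compute_degree!

theorem hcube_irred : Irreducible hcube := by
  rw [irreducible_iff_roots_eq_zero_of_degree_le_three (by rw [hcube_natDegree]; norm_num)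
      (by rw [hcube_natDegree])]

  rw [Multiset.eq_zero_iff_forall_notMem]
  intro r hr
  rw [mem_roots'] at hr
  have hr0 : r ^ 3 - 40 * r ^ 2 + 296 * r - 592 = 0 := by
    have := hr.2
    simpa [hcube, IsRoot] using this
  -- r is an algebraic integer, hence an integer
  have hint : IsIntegral ℤ r := by
    refine ⟨X ^ 3 - 40 * X ^ 2 + 296 * X - 592, ?_, ?_⟩
    · monicity!
    · have : (aeval r) ((X : ℤ[X]) ^ 3 - 40 * X ^ 2 + 296 * X - 592) = 0 := by
        simp only [map_sub, map_add, map_mul, map_pow, aeval_X, map_ofNat]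
        linear_combination hr0
      simpa [aeval_def] using this
  obtain ⟨n, hn⟩ := IsIntegrallyClosed.isIntegral_iff.mp hint
  have hn' : (n : ℚ) = r := by exact_mod_cast hn
  have hz : n ^ 3 - 40 * n ^ 2 + 296 * n - 592 = 0 := by
    have : ((n : ℚ)) ^ 3 - 40 * (n:ℚ) ^ 2 + 296 * (n:ℚ) - 592 = 0 := by rw [hn']; exact hr0
    exact_mod_cast this
  have h3 : ((n : ZMod 3)) ^ 3 - 40 * (n : ZMod 3) ^ 2 + 296 * (n : ZMod 3) - 592 = 0 := by
    have := congrArg (Int.cast : ℤ → ZMod 3) hz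
    push_cast at this
    exact this
  revert h3
  generalize (n : ZMod 3) = m
  revert m
  decide

theorem hcube_gal_not_comm : ¬ ∀ σ τ : hcube.Gal, σ * τ = τ * σ := by
  classical
  intro hab
  set K := hcube.SplittingField with hK
  have hcomm : ∀ (σ τ : K ≃ₐ[ℚ] K) (x : K), σ (τ x) = τ (σ x) := by
    intro σ τ x
    have h1 : σ * τ = τ * σ := hab σ τ
    have h2 : (σ * τ) x = (τ * σ) x := by rw [h1]
    rwa [AlgEquiv.mul_apply, AlgEquiv.mul_apply] at h2
  have hsep : hcube.Separable := hcube_irred.separable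
  have hsplits : Splits (hcube.map (algebraMap ℚ K)) := SplittingField.splits hcube
  have hcard : Fintype.card (hcube.rootSet K) = 3 := by
    rw [card_rootSet_eq_natDegree hsep hsplits, hcube_natDegree]
  have hcard' : (hcube.rootSet K).toFinset.card = 3 := by
    rw [Set.toFinset_card]; exact hcard
  obtain ⟨α, β, γ, hab', hac, hbc, hset⟩ := Finset.card_eq_three.mp hcard'
  have hmemroot : ∀ x : K, x ∈ hcube.rootSet K ↔ (x = α ∨ x = β ∨ x = γ) := by
    intro x
    rw [← Set.mem_toFinset, hset]
    simp
  have hne : hcube ≠ 0 := fun h => by simpa [h] using hcube_natDegree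
  have hroot : ∀ x : K, x ∈ hcube.rootSet K ↔ aeval x hcube = 0 := by
    intro x; rw [mem_rootSet]; exact ⟨fun h => h.2, fun h => ⟨hne, h⟩⟩
  have hrα : aeval α hcube = 0 := (hroot α).mp ((hmemroot α).mpr (Or.inl rfl))
  have hrβ : aeval β hcube = 0 := (hroot β).mp ((hmemroot β).mpr (Or.inr (Or.inl rfl)))
  have hrγ : aeval γ hcube = 0 := (hroot γ).mp ((hmemroot γ).mpr (Or.inr (Or.inr rfl)))
  have heq : ∀ x : K, aeval x hcube = 0 → x ^ 3 - 40 * x ^ 2 + 296 * x - 592 = 0 := by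
    intro x hx
    simpa [hcube, map_sub, map_add, map_mul, map_pow, aeval_X, map_ofNat] using hx
  have A := heq α hrα
  have B := heq β hrβ
  have C := heq γ hrγ
  have hperm : ∀ (σ : K ≃ₐ[ℚ] K) (x : K), aeval x hcube = 0 →
      (σ x = α ∨ σ x = β ∨ σ x = γ) := by
    intro σ x hx
    have h0 : aeval (σ.toAlgHom x) hcube = σ.toAlgHom (aeval x hcube) :=
      aeval_algHom_apply σ.toAlgHom x hcube
    have : aeval (σ x) hcube = 0 := by simpa [hx] using h0
    exact (hmemroot _).mp ((hroot _).mpr this)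
  have htrans : ∀ x y : K, aeval x hcube = 0 → aeval y hcube = 0 →
      ∃ τ : K ≃ₐ[ℚ] K, τ x = y := by
    intro x y hx hy
    have hmx := minpoly.eq_of_irreducible hcube_irred hx
    have hmy := minpoly.eq_of_irreducible hcube_irred hy
    have hxy : minpoly ℚ y = minpoly ℚ x := hmy.symm.trans hmx
    obtain ⟨τ, hτ⟩ := (Normal.minpoly_eq_iff_mem_orbit K (h := Normal.of_isSplittingField (hFEp := IsSplittingField.splittingField hcube) hcube)).mp hxy
    exact ⟨τ, hτ⟩
  have key : ∀ (σ : K ≃ₐ[ℚ] K) (x y z : K), aeval x hcube = 0 → aeval y hcube = 0 →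
      y ≠ z → σ x = x → σ y = z → False := by
    intro σ x y z hx hy hyz hfix hswap
    obtain ⟨τ, hτ⟩ := htrans x y hx hy
    have := hcomm σ τ x
    rw [hτ, hfix, hτ, hswap] at this
    exact hyz this.symm
  set δ : K := (α - β) * (β - γ) * (γ - α) with hδ
  have hfixδ : ∀ σ : K ≃ₐ[ℚ] K, σ δ = δ := by
    intro σ
    have hσδ : σ δ = (σ α - σ β) * (σ β - σ γ) * (σ γ - σ α) := by
      rw [hδ]; simp [map_mul, map_sub]
    have hσα := hperm σ α hrα
    have hσβ := hperm σ β hrβ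
    have hσγ := hperm σ γ hrγ
    have inj := σ.injective
    rcases hσα with h1 | h1 | h1 <;> rcases hσβ with h2 | h2 | h2
    · -- σα = α, σβ = α : impossible
      exact absurd (inj (h1.trans h2.symm)) hab'
    · -- σα = α, σβ = β ⇒ σγ = γ : identity on roots
      have h3 : σ γ = γ := by
        rcases hσγ with h3 | h3 | h3
        · exact absurd (inj (h3.trans h1.symm)) (Ne.symm hac)
        · exact absurd (inj (h3.trans h2.symm)) (Ne.symm hbc)
        · exact h3
      rw [hσδ, h1, h2, h3, hδ]
    · -- σα = α, σβ = γ : transposition fixing α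
      exact (key σ α β γ hrα hrβ hbc h1 h2).elim
    · -- σα = β, σβ = α ⇒ σγ = γ : transposition fixing γ
      have h3 : σ γ = γ := by
        rcases hσγ with h3 | h3 | h3
        · exact absurd (inj (h3.trans h2.symm)) (Ne.symm hbc)
        · exact absurd (inj (h3.trans h1.symm)) (Ne.symm hac)
        · exact h3
      exact (key σ γ α β hrγ hrα hab' h3 h1).elim
    · -- σα = β, σβ = β : impossible
      exact absurd (inj (h1.trans h2.symm)) hab'
    · -- σα = β, σβ = γ ⇒ σγ = α : 3-cycle
      have h3 : σ γ = α := by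
        rcases hσγ with h3 | h3 | h3
        · exact h3
        · exact absurd (inj (h3.trans h1.symm)) (Ne.symm hac)
        · exact absurd (inj (h3.trans h2.symm)) (Ne.symm hbc)
      rw [hσδ, h1, h2, h3, hδ]; ring
    · -- σα = γ, σβ = α ⇒ σγ = β : 3-cycle
      have h3 : σ γ = β := by
        rcases hσγ with h3 | h3 | h3
        · exact absurd (inj (h3.trans h2.symm)) (Ne.symm hbc)
        · exact h3
        · exact absurd (inj (h3.trans h1.symm)) (Ne.symm hac)
      rw [hσδ, h1, h2, h3, hδ]; ring
    · -- σα = γ, σβ = β : transposition fixing β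
      exact (key σ β α γ hrβ hrα hac h2 h1).elim
    · -- σα = γ, σβ = γ : impossible
      exact absurd (inj (h1.trans h2.symm)) hab'
  haveI : IsGalois ℚ K := by haveI : IsSplittingField ℚ K hcube := IsSplittingField.splittingField hcube; exact IsGalois.of_separable_splitting_field hsep
  have list_tfae_out := (IsGalois.tfae (F := ℚ) (E := K)).out 0 1
  have hbot : IntermediateField.fixedField (⊤ : Subgroup (K ≃ₐ[ℚ] K)) = ⊥ :=
    (list_tfae_out).mp inferInstance
  have hδmem : δ ∈ IntermediateField.fixedField (⊤ : Subgroup (K ≃ₐ[ℚ] K)) := by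
    intro g
    exact hfixδ g
  rw [hbot, IntermediateField.mem_bot] at hδmem
  obtain ⟨q, hq⟩ := hδmem
  have S1 : α ^ 2 + α * β + β ^ 2 - 40 * (α + β) + 296 = 0 := by
    apply mul_left_cancel₀ (sub_ne_zero.mpr hab')
    linear_combination A - B
  have S2 : β ^ 2 + β * γ + γ ^ 2 - 40 * (β + γ) + 296 = 0 := by
    apply mul_left_cancel₀ (sub_ne_zero.mpr hbc)
    linear_combination B - C
  have he1 : α + β + γ = 40 := by
    apply mul_left_cancel₀ (sub_ne_zero.mpr hac)
    linear_combination S1 - S2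
  have he2 : α * β + β * γ + γ * α = 296 := by
    linear_combination (α + β) * he1 - S1
  have he3 : α * β * γ = 592 := by
    linear_combination γ * he2 - γ ^ 2 * he1 + C
  have hδsq : δ ^ 2 = 1600768 := by
    rw [hδ]
    linear_combination
      ((α*β+β*γ+γ*α) ^ 2 * ((α+β+γ) + 40) - 4 * (α*β*γ) * ((α+β+γ) ^ 2 + 40 * (α+β+γ) + 1600)
        + 18 * (α*β+β*γ+γ*α) * (α*β*γ)) * he1
      + (1600 * ((α*β+β*γ+γ*α) + 296) - 4 * ((α*β+β*γ+γ*α) ^ 2 + 296 * (α*β+β*γ+γ*α) + 296 ^ 2)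
        + 720 * (α*β*γ)) * he2
      + (-42880 - 27 * ((α*β*γ) + 592)) * he3
  have hq2 : q ^ 2 = 1600768 := by
    have h0 : algebraMap ℚ K (q ^ 2) = algebraMap ℚ K 1600768 := by
      rw [map_pow, hq, hδsq]; simp
    exact (algebraMap ℚ K).injective h0
  have h37 : (q / 208) ^ 2 = 37 := by
    rw [div_pow, hq2]; norm_num
  have hirr : Irrational (Real.sqrt 37) :=
    Nat.Prime.irrational_sqrt (by norm_num)
  apply hirr
  refine ⟨|q / 208|, ?_⟩
  have hcast : ((q / 208 : ℚ) : ℝ) ^ 2 = 37 := by exact_mod_cast h37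
  rw [← hcast, Real.sqrt_sq_eq_abs]
  push_cast
  ring

theorem rank5_codegree_poly_not_abelian :
    ¬ ∀ σ τ : (X ^ 5 - 48 * X ^ 4 + 632 * X ^ 3 - 3600 * X ^ 2 + 9472 * X
        - 9472 : ℚ[X]).Gal, σ * τ = τ * σ := by
  intro hcomm
  set f : ℚ[X] := X ^ 5 - 48 * X ^ 4 + 632 * X ^ 3 - 3600 * X ^ 2 + 9472 * X - 9472 with hf
  have hdvd : hcube ∣ f := ⟨(X - 4) ^ 2, by rw [hf]; unfold hcube; ring⟩
  have hf0 : f ≠ 0 := by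
    intro h
    have := congrArg (eval 0) h
    simp [hf] at this
  have habel : ∀ σ τ : hcube.Gal, σ * τ = τ * σ := by
    intro σ τ
    obtain ⟨σ', rfl⟩ := Polynomial.Gal.restrictDvd_surjective hdvd hf0 σ
    obtain ⟨τ', rfl⟩ := Polynomial.Gal.restrictDvd_surjective hdvd hf0 τ
    rw [← map_mul, ← map_mul, hcomm σ' τ']
  exact hcube_gal_not_comm habel
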